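/- Let f(x) = 1/(x log b) · 1_{(1,b)}(x) with b ≥ e². Then the self-convolution g = f*f satisfies g(x) ≤ 1/x for all 2 < x < b+1. -/

import Mathlib

open MeasureTheory Real

/-- For `b ≥ e²`, the self-convolution of the truncated Pareto density satisfies
`g(x) ≤ 1/x` on `(2, b+1)`. -/
theorem stmt_4 (b : ℝ) (hb : Real.exp 2 ≤ b)
    (f : ℝ → ℝ)
    (hf : f = fun x => if 1 < x ∧ x < b then 1 / (x * Real.log b) else 0)
    (g : ℝ → ℝ) (hg : g = fun x => ∫ y, f (x - y) * f y) :
    ∀ x, 2 < x → x < b + 1 → g x ≤ 1 / x := by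
  intro x hx2 hxb
  have hbpos : (0:ℝ) < b := lt_of_lt_of_le (Real.exp_pos 2) hb
  have hL2 : (2:ℝ) ≤ Real.log b := (Real.le_log_iff_exp_le hbpos).mpr hb
  set L := Real.log b with hLdef
  have hLpos : 0 < L := lt_of_lt_of_le two_pos hL2
  have hx1 : (1:ℝ) < x - 1 := by linarith
  have hxpos : (0:ℝ) < x := by linarith
  -- the integrand as an indicator function
  have hkey : (fun y => f (x - y) * f y)
      = Set.indicator (Set.Ioo 1 (x-1)) (fun y => 1/((x-y)*y*L^2)) := by
    funext y
    by_cases hy : y ∈ Set.Ioo 1 (x-1)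
    · obtain ⟨hy1, hy2⟩ := hy
      rw [Set.indicator_of_mem (Set.mem_Ioo.mpr ⟨hy1, hy2⟩)]
      have h1 : 1 < x - y := by linarith
      have h2 : x - y < b := by linarith
      have h3 : y < b := by linarith
      subst hf
      simp only
      rw [if_pos ⟨h1, h2⟩, if_pos ⟨hy1, h3⟩]
      have hxy0 : x - y ≠ 0 := by linarith
      have hy0 : y ≠ 0 := by linarith
      field_simp
    · rw [Set.indicator_of_notMem hy]
      subst hf
      simp only
      simp only [Set.mem_Ioo, not_and_or, not_lt] at hy
      rcases hy with h | h
      · have hc : ¬(1 < y ∧ y < b) := by rintro ⟨h1, _⟩; linarith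
        rw [if_neg hc, mul_zero]
      · have hc : ¬(1 < x - y ∧ x - y < b) := by rintro ⟨h1, _⟩; linarith
        rw [if_neg hc, zero_mul]
  rw [hg]
  simp only
  rw [hkey, integral_indicator measurableSet_Ioo,
    ← integral_Ioc_eq_integral_Ioo, ← intervalIntegral.integral_of_le hx1.le]
  -- rewrite the integrand via partial fractions
  have hcongr : Set.EqOn (fun y => 1/((x-y)*y*L^2))
      (fun y => (1/(x*L^2)) * (1/y + 1/(x-y))) (Set.uIcc (1:ℝ) (x-1)) := by
    intro y hy
    rw [Set.uIcc_of_le hx1.le] at hy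
    obtain ⟨hy1, hy2⟩ := hy
    have hy0 : (0:ℝ) < y := by linarith
    have hxy : (0:ℝ) < x - y := by linarith
    simp only
    field_simp
    ring
  rw [intervalIntegral.integral_congr hcongr, intervalIntegral.integral_const_mul]
  have hint1 : IntervalIntegrable (fun y : ℝ => 1/y) volume 1 (x-1) := by
    apply ContinuousOn.intervalIntegrable
    apply ContinuousOn.div continuousOn_const continuousOn_id
    intro y hy
    rw [Set.uIcc_of_le hx1.le] at hy
    simp only [id]
    have := hy.1; intro h; rw [h] at this; linarith
  have hint2 : IntervalIntegrable (fun y : ℝ => 1/(x-y)) volume 1 (x-1) := by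
    apply ContinuousOn.intervalIntegrable
    apply ContinuousOn.div continuousOn_const (by fun_prop)
    intro y hy
    rw [Set.uIcc_of_le hx1.le] at hy
    have := hy.2; intro h; have : x = y := by linarith [sub_eq_zero.mp h]
    linarith [hy.2]
  rw [intervalIntegral.integral_add hint1 hint2]
  have h0ni : (0:ℝ) ∉ Set.uIcc (1:ℝ) (x-1) := by
    rw [Set.uIcc_of_le hx1.le]
    intro h; linarith [h.1]
  have e1 : ∫ y in (1:ℝ)..(x-1), 1/y = Real.log (x-1) := by
    rw [integral_one_div h0ni, div_one]
  have e2 : ∫ y in (1:ℝ)..(x-1), 1/(x - y) = Real.log (x-1) := by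
    rw [intervalIntegral.integral_comp_sub_left (fun y => 1/y) x]
    have : x - (x - 1) = 1 := by ring
    rw [this, integral_one_div h0ni, div_one]
  rw [e1, e2]
  -- final bound
  have hlog : Real.log (x-1) ≤ L := Real.log_le_log (by linarith) (by linarith)
  have hlognn : 0 ≤ Real.log (x-1) := Real.log_nonneg (by linarith)
  have h2l : Real.log (x-1) + Real.log (x-1) ≤ L^2 := by nlinarith
  calc (1/(x*L^2)) * (Real.log (x-1) + Real.log (x-1))
      = (Real.log (x-1) + Real.log (x-1)) / (x*L^2) := by ring
    _ ≤ L^2 / (x*L^2) := by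
        apply div_le_div_of_nonneg_right h2l
        positivity
    _ = 1/x := by field_simp
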